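/- Let X be a random vector in ℝ^d with E‖X‖² < ∞, m = E(X), and let α = ψ(λ‖X‖)/(λ‖X‖) (interpreted as 1 when X = 0), where ψ(t) = min(t,1) and λ > 0. Then for every unit vector θ, ⟨θ, αX - m⟩² ≤ ⟨θ, X - m⟩² + (1 - α)⟨θ, m⟩². -/

import Mathlib

open MeasureTheory ProbabilityTheory
open scoped Classical
open scoped RealInnerProductSpace

lemma aux_alg (a b α : ℝ) (h0 : 0 ≤ α) (h1 : α ≤ 1) :
    (α * a - b) ^ 2 ≤ (a - b) ^ 2 + (1 - α) * b ^ 2 := by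
  nlinarith [sq_nonneg (a - b), sq_nonneg a, mul_nonneg h0 (sq_nonneg a)]

theorem threshold_inner_sq_bound {Ω : Type*} [MeasureSpace Ω]
    [IsProbabilityMeasure (ℙ : Measure Ω)] {d : ℕ}
    (X : Ω → EuclideanSpace ℝ (Fin d)) (hX : MemLp X 2 (ℙ : Measure Ω))
    (lam : ℝ) (hlam : 0 < lam)
    (m : EuclideanSpace ℝ (Fin d)) (hm : m = ∫ ω, X ω)
    (θ : EuclideanSpace ℝ (Fin d)) (hθ : ‖θ‖ = 1) (ω : Ω) :
    (fun α : ℝ => ⟪θ, α • X ω - m⟫ ^ 2 ≤ ⟪θ, X ω - m⟫ ^ 2 + (1 - α) * ⟪θ, m⟫ ^ 2)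
      (if X ω = 0 then 1 else min (lam * ‖X ω‖) 1 / (lam * ‖X ω‖)) := by
  simp only
  set α : ℝ := if X ω = 0 then 1 else min (lam * ‖X ω‖) 1 / (lam * ‖X ω‖) with hα
  have h0 : 0 ≤ α := by
    rw [hα]; split_ifs with h
    · norm_num
    · have : 0 < lam * ‖X ω‖ := mul_pos hlam (norm_pos_iff.mpr h)
      positivity
  have h1 : α ≤ 1 := by
    rw [hα]; split_ifs with h
    · exact le_refl 1
    · have hpos : 0 < lam * ‖X ω‖ := mul_pos hlam (norm_pos_iff.mpr h)
      rw [div_le_one hpos]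
      exact min_le_left _ _
  have hrw : ∀ c : ℝ, ⟪θ, c • X ω - m⟫ = c * ⟪θ, X ω⟫ - ⟪θ, m⟫ := by
    intro c
    rw [inner_sub_right, real_inner_smul_right]
  rw [hrw, show ⟪θ, X ω - m⟫ = 1 * ⟪θ, X ω⟫ - ⟪θ, m⟫ by rw [inner_sub_right]; ring]
  have := aux_alg ⟪θ, X ω⟫ ⟪θ, m⟫ α h0 h1
  linarith [this]
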